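/- Let X be a finite-dimensional real vector space with norm N, and suppose l₁, l₂ are subderivatives of N at α ∈ X. If N restricted to a subspace V ∋ α is differentiable at α, then l₁ and l₂ agree on V. Conversely, if every pair of subderivatives of N at α agree on V, and α ∈ V, then the restriction N|V is differentiable at α. -/

import Mathlib

open Filter Set Asymptotics
open scoped Topology

lemma aux_fwd {E : Type*} [NormedAddCommGroup E] [NormedSpace ℝ E]
    (f : E → ℝ) (a : E) (hdiff : DifferentiableAt ℝ f a)
    (l : E →ₗ[ℝ] ℝ) (hla : l a = f a) (hl : ∀ x, l x ≤ f x) (b : E) :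
    l b = (fderiv ℝ f a) b := by
  set d : ℝ := (fderiv ℝ f a) b with hd
  have hc : HasDerivAt (fun t : ℝ => a + t • b) b 0 := by
    simpa using ((hasDerivAt_id (0:ℝ)).smul_const b).const_add a
  have hg : HasDerivAt (fun t : ℝ => f (a + t • b)) d 0 := by
    have h0 : a + (0:ℝ) • b = a := by simp
    have h1 : HasFDerivAt f (fderiv ℝ f a) (a + (0:ℝ) • b) := by
      rw [h0]; exact hdiff.hasFDerivAt
    have := h1.comp_hasDerivAt 0 hc
    exact this
  have hslope := hasDerivAt_iff_tendsto_slope.1 hg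
  have key : ∀ t : ℝ, slope (fun t : ℝ => f (a + t • b)) 0 t
      = (f (a + t • b) - f a) / t := by
    intro t
    rw [slope_def_field]
    simp
  have hval : ∀ t : ℝ, l (a + t • b) = f a + t * l b := by
    intro t; simp [map_add, map_smul, hla, smul_eq_mul]
  have h1 : l b ≤ d := by
    refine ge_of_tendsto (hslope.mono_left
      (nhdsWithin_mono _ (fun t (ht : t ∈ Ioi (0:ℝ)) => ne_of_gt ht))) ?_
    · filter_upwards [self_mem_nhdsWithin] with t (ht : 0 < t)
      rw [key t, le_div_iff₀ ht]
      have := hl (a + t • b)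
      have h2 := hval t
      linarith
  have h2 : d ≤ l b := by
    refine le_of_tendsto (hslope.mono_left
      (nhdsWithin_mono _ (fun t (ht : t ∈ Iio (0:ℝ)) => ne_of_lt ht))) ?_
    · filter_upwards [self_mem_nhdsWithin] with t (ht : t < 0)
      rw [key t, div_le_iff_of_neg ht]
      have := hl (a + t • b)
      have h2 := hval t
      linarith
  linarith

set_option maxHeartbeats 1000000 in
lemma aux_rev {E : Type*} [NormedAddCommGroup E] [NormedSpace ℝ E]
    [FiniteDimensional ℝ E]
    (f : E → ℝ)
    (hadd : ∀ x y, f (x + y) ≤ f x + f y)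
    (hsmul : ∀ (c : ℝ) x, f (c • x) = |c| * f x)
    (a : E)
    (H : ∀ l₁ l₂ : E →ₗ[ℝ] ℝ,
      (l₁ a = f a ∧ ∀ x, l₁ x ≤ f x) → (l₂ a = f a ∧ ∀ x, l₂ x ≤ f x) → l₁ = l₂) :
    DifferentiableAt ℝ f a := by
  have h0 : f 0 = 0 := by simpa using hsmul 0 0
  have hneg : ∀ x, f (-x) = f x := by
    intro x; have := hsmul (-1) x; simpa using this
  have hnn : ∀ x, 0 ≤ f x := by
    intro x
    have h1 := hadd x (-x)
    rw [add_neg_cancel, h0, hneg] at h1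
    linarith
  have hsmul' : ∀ (c : ℝ), 0 ≤ c → ∀ x, f (c • x) = c * f x := by
    intro c hc x; rw [hsmul, abs_of_nonneg hc]
  -- the slope function
  set S : E → ℝ → ℝ := fun w t => (f (a + t • w) - f a) / t with hS
  -- convexity: monotonicity of slopes
  have hSmono : ∀ w, MonotoneOn (S w) (Ioi 0) := by
    intro w s (hs : 0 < s) t (ht : 0 < t) hst
    have key : f (a + s • w) - f a ≤ (s / t) * (f (a + t • w) - f a) := by
      have hlam0 : 0 ≤ s / t := le_of_lt (div_pos hs ht)
      have hlam1 : s / t ≤ 1 := (div_le_one ht).2 hst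
      have hrep : a + s • w = (1 - s / t) • a + (s / t) • (a + t • w) := by
        have htne : t ≠ 0 := ne_of_gt ht
        match_scalars <;> field_simp <;> ring
      have h1 : f (a + s • w) ≤ (1 - s / t) * f a + (s / t) * f (a + t • w) := by
        rw [hrep]
        calc f ((1 - s / t) • a + (s / t) • (a + t • w))
            ≤ f ((1 - s / t) • a) + f ((s / t) • (a + t • w)) := hadd _ _
          _ = (1 - s / t) * f a + (s / t) * f (a + t • w) := by
              rw [hsmul' _ (by linarith), hsmul' _ hlam0]
      nlinarith
    show (f (a + s • w) - f a) / s ≤ (f (a + t • w) - f a) / t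
    rw [div_le_div_iff₀ hs ht]
    have : (s / t) * (f (a + t • w) - f a) * t = (f (a + t • w) - f a) * s := by
      field_simp
    nlinarith [key]
  have hSlb : ∀ w t, 0 < t → -f (-w) ≤ S w t := by
    intro w t ht
    have h1 : f a ≤ f (a + t • w) + t * f (-w) := by
      have h2 := hadd (a + t • w) (t • (-w))
      have h3 : a + t • w + t • (-w) = a := by
        rw [smul_neg]; abel
      rw [h3, hsmul' t ht.le (-w)] at h2
      linarith
    show -f (-w) ≤ (f (a + t • w) - f a) / t
    rw [le_div_iff₀ ht]; linarith
  have hbdd : ∀ w, BddBelow (S w '' Ioi 0) := by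
    intro w
    exact ⟨-f (-w), by rintro _ ⟨t, ht, rfl⟩; exact hSlb w t ht⟩
  have hne : ∀ w : E, (S w '' Ioi 0).Nonempty := fun w => ⟨S w 1, 1, by norm_num⟩
  set p : E → ℝ := fun w => sInf (S w '' Ioi 0) with hp
  have hple : ∀ w t, 0 < t → p w ≤ S w t := by
    intro w t ht; exact csInf_le (hbdd w) ⟨t, ht, rfl⟩
  have hlep : ∀ w (c : ℝ), (∀ t, 0 < t → c ≤ S w t) → c ≤ p w := by
    intro w c hc
    exact le_csInf (hne w) (by rintro _ ⟨t, ht, rfl⟩; exact hc t ht)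
  -- p at 0
  have hS0 : ∀ t : ℝ, 0 < t → S (0:E) t = 0 := by
    intro t ht; show (f (a + t • (0:E)) - f a) / t = 0; simp
  have hp0 : p 0 = 0 := by
    refine le_antisymm ?_ (hlep 0 0 (fun t ht => (hS0 t ht).ge))
    have := hple 0 1 one_pos
    rwa [hS0 1 one_pos] at this
  -- subadditivity of p
  have hS2 : ∀ w z t, 0 < t → S (w + z) t ≤ S w (2 * t) + S z (2 * t) := by
    intro w z t ht
    have hrep : a + t • (w + z) = (1/2 : ℝ) • (a + (2*t) • w) + (1/2 : ℝ) • (a + (2*t) • z) := by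
      match_scalars <;> ring
    have h1 : f (a + t • (w + z)) ≤ (1/2) * f (a + (2*t) • w) + (1/2) * f (a + (2*t) • z) := by
      rw [hrep]
      calc f ((1/2 : ℝ) • (a + (2*t) • w) + (1/2 : ℝ) • (a + (2*t) • z))
          ≤ f ((1/2 : ℝ) • (a + (2*t) • w)) + f ((1/2 : ℝ) • (a + (2*t) • z)) := hadd _ _
        _ = (1/2) * f (a + (2*t) • w) + (1/2) * f (a + (2*t) • z) := by
            rw [hsmul' _ (by norm_num), hsmul' _ (by norm_num)]
    show (f (a + t • (w + z)) - f a) / t ≤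
      (f (a + (2*t) • w) - f a) / (2*t) + (f (a + (2*t) • z) - f a) / (2*t)
    rw [← add_div, div_le_div_iff₀ ht (by linarith)]
    nlinarith
  have hpsub : ∀ w z, p (w + z) ≤ p w + p z := by
    intro w z
    refine le_of_forall_pos_le_add ?_
    intro ε hε
    obtain ⟨_, ⟨t₁, (ht₁ : 0 < t₁), rfl⟩, h1⟩ :=
      exists_lt_of_csInf_lt (hne w) (show p w < p w + ε/2 by linarith)
    obtain ⟨_, ⟨t₂, (ht₂ : 0 < t₂), rfl⟩, h2⟩ :=
      exists_lt_of_csInf_lt (hne z) (show p z < p z + ε/2 by linarith)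
    set t := min t₁ t₂ with htdef
    have ht : 0 < t := lt_min ht₁ ht₂
    have e1 : S w t ≤ S w t₁ := hSmono w ht (by exact ht₁) (min_le_left _ _)
    have e2 : S z t ≤ S z t₂ := hSmono z ht (by exact ht₂) (min_le_right _ _)
    have e3 : p (w + z) ≤ S (w + z) (t/2) := hple _ _ (by linarith)
    have e4 := hS2 w z (t/2) (by linarith)
    rw [show 2 * (t/2) = t by ring] at e4
    linarith
  -- positive homogeneity of p
  have hphalf : ∀ (c : ℝ), 0 < c → ∀ w, p (c • w) ≤ c * p w := by
    intro c hc w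
    have key : ∀ s, 0 < s → p (c • w) ≤ c * S w s := by
      intro s hs
      have h1 : S (c • w) (s / c) = c * S w s := by
        show (f (a + (s/c) • c • w) - f a) / (s/c) = c * ((f (a + s • w) - f a) / s)
        rw [smul_smul, div_mul_cancel₀ _ (ne_of_gt hc)]
        field_simp
      have := hple (c • w) (s / c) (div_pos hs hc)
      rw [h1] at this; exact this
    have h2 : p (c • w) / c ≤ p w := by
      refine hlep w _ (fun t ht => ?_)
      rw [div_le_iff₀ hc]
      have := key t ht; linarith [mul_comm c (S w t)]
    calc p (c • w) = c * (p (c • w) / c) := by field_simp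
      _ ≤ c * p w := by
          exact mul_le_mul_of_nonneg_left h2 hc.le
  have hphomog : ∀ (c : ℝ), 0 < c → ∀ w, p (c • w) = c * p w := by
    intro c hc w
    refine le_antisymm (hphalf c hc w) ?_
    have := hphalf c⁻¹ (inv_pos.2 hc) (c • w)
    rw [smul_smul, inv_mul_cancel₀ (ne_of_gt hc), one_smul] at this
    calc c * p w ≤ c * (c⁻¹ * p (c • w)) := mul_le_mul_of_nonneg_left this hc.le
      _ = p (c • w) := by field_simp
  have hpnegpair : ∀ w, -p (-w) ≤ p w := by
    intro w
    have := hpsub w (-w)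
    rw [add_neg_cancel, hp0] at this
    linarith
  -- p at a and -a
  have hSa : ∀ t : ℝ, 0 < t → S a t = f a := by
    intro t ht
    show (f (a + t • a) - f a) / t = f a
    have : a + t • a = (1 + t) • a := by rw [add_smul, one_smul]
    rw [this, hsmul' _ (by linarith)]
    field_simp
    ring
  have hpa : p a = f a := by
    refine le_antisymm ?_ (hlep a _ (fun t ht => (hSa t ht).ge))
    have := hple a 1 one_pos; rwa [hSa 1 one_pos] at this
  have hpnega : p (-a) = -f a := by
    have hSna : ∀ t : ℝ, 0 < t → S (-a) t = (|1 - t| - 1) * f a / t := by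
      intro t ht
      show (f (a + t • (-a)) - f a) / t = _
      have : a + t • (-a) = (1 - t) • a := by
        rw [sub_smul, one_smul, smul_neg]; abel
      rw [this, hsmul]
      ring
    refine le_antisymm ?_ ?_
    · have := hple (-a) 1 one_pos
      rw [hSna 1 one_pos] at this
      simpa using this
    · refine hlep (-a) _ (fun t ht => ?_)
      rw [hSna t ht, le_div_iff₀ ht]
      have h1 : -t ≤ |1 - t| - 1 := by
        rcases abs_cases (1 - t) with ⟨h, _⟩ | ⟨h, _⟩ <;> nlinarith
      nlinarith [hnn a]
  -- key inequality for Hahn-Banach domination on a span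
  have hdom : ∀ (c : ℝ) (w : E), c * p w ≤ p (c • w) := by
    intro c w
    rcases lt_trichotomy c 0 with hc | hc | hc
    · have h1 : p (c • w) = -c * p (-w) := by
        have : c • w = (-c) • (-w) := by rw [neg_smul, smul_neg, neg_neg]
        rw [this, hphomog (-c) (by linarith) (-w)]
      rw [h1]
      have := hpnegpair w
      nlinarith
    · simp [hc, hp0]
    · rw [hphomog c hc w]
  -- existence of a linear functional below p attaining p at w
  have hattain : ∀ w : E, ∃ l : E →ₗ[ℝ] ℝ, (∀ x, l x ≤ p x) ∧ l w = p w := by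
    intro w
    by_cases hw : w = 0
    · obtain ⟨l, hl1, hl2⟩ := exists_extension_of_le_sublinear
        ((0 : E →ₗ[ℝ] ℝ).toPMap ⊥) p (fun c hc x => hphomog c hc x) hpsub
        (fun x => by
          have hx0 : (x : E) = 0 := by
            have hx := x.2
            exact (Submodule.mem_bot ℝ).1 hx
          simp [LinearMap.toPMap_apply, hx0, hp0]
          exact le_of_eq rfl)
      exact ⟨l, hl2, by rw [hw, map_zero, hp0]⟩
    · obtain ⟨l, hl1, hl2⟩ := exists_extension_of_le_sublinear
        (LinearPMap.mkSpanSingleton w (p w) hw) p (fun c hc x => hphomog c hc x) hpsub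
        (fun x => by
          obtain ⟨c, hc⟩ := Submodule.mem_span_singleton.1 x.2
          have hx : x = ⟨c • w, hc ▸ (Submodule.smul_mem _ c (Submodule.mem_span_singleton_self w))⟩ := by
            apply Subtype.ext; exact hc.symm
          rw [hx, LinearPMap.mkSpanSingleton'_apply]
          simpa [smul_eq_mul] using hdom c w)
      refine ⟨l, hl2, ?_⟩
      have := hl1 ⟨w, Submodule.mem_span_singleton_self w⟩
      rw [LinearPMap.mkSpanSingleton_apply] at this
      exact this
  -- any l ≤ p is a subgradient of f at a
  have hsubgrad : ∀ l : E →ₗ[ℝ] ℝ, (∀ x, l x ≤ p x) → (l a = f a ∧ ∀ x, l x ≤ f x) := by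
    intro l hl
    have hla : l a = f a := by
      have h1 : l a ≤ f a := hpa ▸ hl a
      have h2 : l (-a) ≤ -f a := hpnega ▸ hl (-a)
      rw [map_neg] at h2
      linarith
    refine ⟨hla, fun x => ?_⟩
    have h1 : l x = l a + l (x - a) := by rw [map_sub]; ring
    have h2 : l (x - a) ≤ S (x - a) 1 := le_trans (hl _) (hple _ 1 one_pos)
    have h3 : S (x - a) 1 = f x - f a := by
      show (f (a + (1:ℝ) • (x - a)) - f a) / 1 = f x - f a
      rw [one_smul]
      simp
    rw [h1, hla]
    rw [h3] at h2
    linarith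
  -- using uniqueness hypothesis: p is linear, given by l₀
  obtain ⟨l₀, hl₀p, _⟩ := hattain 0
  have hl₀ := hsubgrad l₀ hl₀p
  have hplin : ∀ w, p w = l₀ w := by
    intro w
    obtain ⟨l, hlp, hlw⟩ := hattain w
    have := H l₀ l hl₀ (hsubgrad l hlp)
    rw [← hlw, this]
  -- lower bound
  have hlow : ∀ x : E, 0 ≤ f (a + x) - f a - l₀ x := by
    intro x
    have h1 : l₀ (a + x) ≤ f (a + x) := hl₀.2 _
    rw [map_add, hl₀.1] at h1
    linarith
  -- one-dimensional little-o in each direction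
  have hphi : ∀ w : E, (fun t : ℝ => f (a + t • w) - f a - t * l₀ w) =o[𝓝 0] (fun t : ℝ => t) := by
    intro w
    set φ : ℝ → ℝ := fun t => f (a + t • w) - f a - t * l₀ w with hφ
    rw [isLittleO_iff_tendsto (by intro t ht; simp [hφ, ht])]
    have hsrc : (𝓝 (0:ℝ)) = (𝓝[<] (0:ℝ) ⊔ 𝓝[>] (0:ℝ)) ⊔ pure 0 := by
      rw [nhdsLT_sup_nhdsGT, nhdsNE_sup_pure]
    refine Tendsto.mono_left ?_ (le_of_eq hsrc)
    refine tendsto_sup.2 ⟨tendsto_sup.2 ⟨?_, ?_⟩, ?_⟩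
    · -- left limit
      have hneg_t : Tendsto (fun t : ℝ => -t) (𝓝[<] (0:ℝ)) (𝓝[>] (0:ℝ)) := by
        apply tendsto_nhdsWithin_of_tendsto_nhds_of_eventually_within
        · have : Tendsto (fun t : ℝ => -t) (𝓝 0) (𝓝 0) := by
            simpa using (continuous_neg.tendsto (0:ℝ))
          exact this.mono_left nhdsWithin_le_nhds
        · filter_upwards [self_mem_nhdsWithin] with t (ht : t < 0)
          exact Set.mem_Ioi.2 (neg_pos.2 ht)
      have h1 : Tendsto (S (-w)) (𝓝[>] (0:ℝ)) (𝓝 (p (-w))) :=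
        MonotoneOn.tendsto_nhdsGT (hSmono (-w)) (hbdd (-w))
      have h2 : Tendsto (fun t : ℝ => -(S (-w) (-t)) - l₀ w) (𝓝[<] (0:ℝ)) (𝓝 0) := by
        have h3 := ((h1.comp hneg_t).neg).sub_const (l₀ w)
        have h4 : -p (-w) - l₀ w = 0 := by
          rw [hplin (-w), map_neg]; ring
        rw [h4] at h3
        exact h3
      refine h2.congr' ?_
      filter_upwards [self_mem_nhdsWithin] with t (ht : t < 0)
      have htne : t ≠ 0 := ne_of_lt ht
      show -(S (-w) (-t)) - l₀ w = φ t / t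
      show -((f (a + (-t) • (-w)) - f a) / (-t)) - l₀ w = _
      rw [smul_neg, neg_smul, neg_neg, div_neg, neg_neg]
      show (f (a + t • w) - f a) / t - l₀ w = (f (a + t • w) - f a - t * l₀ w) / t
      rw [eq_div_iff htne]
      field_simp
    · -- right limit
      have h1 : Tendsto (S w) (𝓝[>] (0:ℝ)) (𝓝 (p w)) :=
        MonotoneOn.tendsto_nhdsGT (hSmono w) (hbdd w)
      have h2 := h1.sub_const (l₀ w)
      rw [hplin w, sub_self] at h2
      refine h2.congr' ?_
      filter_upwards [self_mem_nhdsWithin] with t (ht : 0 < t)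
      have htne : t ≠ 0 := ne_of_gt ht
      show S w t - l₀ w = φ t / t
      show (f (a + t • w) - f a) / t - l₀ w = (f (a + t • w) - f a - t * l₀ w) / t
      rw [eq_div_iff htne]
      field_simp
    · -- at the point itself
      have h5 : φ 0 / 0 = 0 := by simp
      have := tendsto_pure_nhds (fun t : ℝ => φ t / t) 0
      rwa [h5] at this
  -- assemble Fréchet differentiability
  classical
  rcases eq_or_ne (Module.finrank ℝ E) 0 with hn | hn
  · have hsing : Subsingleton E := by
      have := Module.finrank_zero_iff (R := ℝ) (M := E)
      exact this.1 hn
    have hf : f = fun _ => f a := funext fun x => by rw [Subsingleton.elim x a]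
    rw [hf]; exact differentiableAt_const _
  · have hnpos : 0 < Module.finrank ℝ E := Nat.pos_of_ne_zero hn
    set n := Module.finrank ℝ E with hndef
    have hnR : (0:ℝ) < (n:ℝ) := by exact_mod_cast hnpos
    set b := Module.finBasis ℝ E with hb
    -- finite subadditivity
    have hsum : ∀ (s : Finset (Fin n)) (g : Fin n → E),
        f (∑ i ∈ s, g i) ≤ ∑ i ∈ s, f (g i) := by
      intro s g
      induction s using Finset.cons_induction with
      | empty => simp [h0]
      | cons j s hj ih =>
        rw [Finset.sum_cons, Finset.sum_cons]
        exact le_trans (hadd _ _) (by linarith)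
    -- key pointwise bound
    have hkey : ∀ x : E, f (a + x) - f a - l₀ x ≤
        ∑ i, (f (a + ((n:ℝ) * b.repr x i) • b i) - f a - ((n:ℝ) * b.repr x i) * l₀ (b i)) := by
      intro x
      have hrep : ∑ i, ((n:ℝ)⁻¹) • (a + ((n:ℝ) * b.repr x i) • b i) = a + x := by
        rw [Finset.sum_congr rfl
          (fun i (_ : i ∈ Finset.univ) => smul_add ((n:ℝ)⁻¹) a (((n:ℝ) * b.repr x i) • b i)),
          Finset.sum_add_distrib]
        congr 1
        · rw [Finset.sum_const, Finset.card_univ, Fintype.card_fin]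
          rw [← Nat.cast_smul_eq_nsmul ℝ, smul_smul]
          rw [mul_inv_cancel₀ (ne_of_gt hnR), one_smul]
        · calc ∑ i, (n:ℝ)⁻¹ • ((n:ℝ) * b.repr x i) • b i
              = ∑ i, b.repr x i • b i := by
                refine Finset.sum_congr rfl (fun i _ => ?_)
                rw [smul_smul]
                congr 1
                field_simp
            _ = x := b.sum_repr x
      have h1 : f (a + x) ≤ ∑ i, (n:ℝ)⁻¹ * f (a + ((n:ℝ) * b.repr x i) • b i) := by
        rw [← hrep]
        refine le_trans (hsum Finset.univ _) ?_
        refine Finset.sum_le_sum (fun i _ => ?_)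
        rw [hsmul' _ (by positivity)]
      have h2 : l₀ x = ∑ i, b.repr x i * l₀ (b i) := by
        conv_lhs => rw [← b.sum_repr x]
        rw [map_sum]
        exact Finset.sum_congr rfl (fun i _ => by rw [map_smul]; rfl)
      have h4 : ∑ i, ((n:ℝ)⁻¹ *
            (f (a + ((n:ℝ) * b.repr x i) • b i) - f a - ((n:ℝ) * b.repr x i) * l₀ (b i)))
          = (∑ i, (n:ℝ)⁻¹ * f (a + ((n:ℝ) * b.repr x i) • b i)) - f a - l₀ x := by
        have hterm : ∀ i : Fin n, (n:ℝ)⁻¹ *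
              (f (a + ((n:ℝ) * b.repr x i) • b i) - f a - ((n:ℝ) * b.repr x i) * l₀ (b i))
            = (n:ℝ)⁻¹ * f (a + ((n:ℝ) * b.repr x i) • b i)
              - (n:ℝ)⁻¹ * f a - b.repr x i * l₀ (b i) := by
          intro i
          field_simp
        rw [Finset.sum_congr rfl (fun i _ => hterm i), Finset.sum_sub_distrib,
          Finset.sum_sub_distrib, ← h2, Finset.sum_const, Finset.card_univ, Fintype.card_fin]
        have : (n : ℕ) • ((n:ℝ)⁻¹ * f a) = f a := by
          rw [nsmul_eq_mul]
          field_simp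
        rw [this]
      have h5 : ∀ i : Fin n,
          0 ≤ f (a + ((n:ℝ) * b.repr x i) • b i) - f a - ((n:ℝ) * b.repr x i) * l₀ (b i) := by
        intro i
        have := hlow (((n:ℝ) * b.repr x i) • b i)
        rwa [map_smul, smul_eq_mul] at this
      calc f (a + x) - f a - l₀ x
          ≤ (∑ i, (n:ℝ)⁻¹ * f (a + ((n:ℝ) * b.repr x i) • b i)) - f a - l₀ x := by linarith
        _ = ∑ i, ((n:ℝ)⁻¹ *
              (f (a + ((n:ℝ) * b.repr x i) • b i) - f a - ((n:ℝ) * b.repr x i) * l₀ (b i))) :=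
            h4.symm
        _ ≤ ∑ i, (f (a + ((n:ℝ) * b.repr x i) • b i) - f a - ((n:ℝ) * b.repr x i) * l₀ (b i)) := by
            refine Finset.sum_le_sum (fun i _ => ?_)
            have h1n : (1:ℝ) ≤ (n:ℝ) := by exact_mod_cast hnpos
            have hle1 : (n:ℝ)⁻¹ ≤ 1 := by
              rw [inv_le_one₀ hnR]
              exact h1n
            exact mul_le_of_le_one_left (h5 i) hle1
    -- each summand is little-o
    have hGi : ∀ i : Fin n,
        (fun x : E => f (a + ((n:ℝ) * b.repr x i) • b i) - f a - ((n:ℝ) * b.repr x i) * l₀ (b i))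
          =o[𝓝 (0:E)] (fun x : E => x) := by
      intro i
      have hcont : Continuous fun x : E => (n:ℝ) * b.repr x i := by
        have h10 := (b.coord i).continuous_of_finiteDimensional
        have h11 : (fun x : E => b.repr x i) = ⇑(b.coord i) :=
          funext fun x => (b.coord_apply i x).symm
        rw [← h11] at h10
        exact continuous_const.mul h10
      have htend : Tendsto (fun x : E => (n:ℝ) * b.repr x i) (𝓝 0) (𝓝 0) := by
        have := hcont.tendsto 0
        simpa using this
      have hcomp := (hphi (b i)).comp_tendsto htend
      refine hcomp.trans_isBigO ?_
      have hL := ((n:ℝ) • LinearMap.toContinuousLinearMap (b.coord i)).isBigO_id (𝓝 (0:E))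
      have h12 : ⇑((n:ℝ) • LinearMap.toContinuousLinearMap (b.coord i))
          = fun x : E => (n:ℝ) * b.repr x i := by
        funext x
        simp [Module.Basis.coord_apply]
      rwa [h12] at hL
    have hGsum := IsLittleO.sum (fun i (_ : i ∈ Finset.univ) => hGi i)
    have hF : (fun x : E => f (a + x) - f a - l₀ x) =o[𝓝 (0:E)] (fun x : E => x) := by
      rw [isLittleO_iff] at hGsum ⊢
      intro ε hε
      filter_upwards [hGsum hε] with x hx
      have h5 := hlow x
      have h6 := hkey x
      have h7 : ‖f (a + x) - f a - l₀ x‖ = f (a + x) - f a - l₀ x := Real.norm_of_nonneg h5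
      rw [h7]
      refine le_trans (le_trans h6 (le_abs_self _)) ?_
      simpa [Finset.sum_apply, Real.norm_eq_abs] using hx
    have hD : HasFDerivAt f (LinearMap.toContinuousLinearMap l₀) a := by
      rw [hasFDerivAt_iff_isLittleO_nhds_zero]
      have h13 : ⇑(LinearMap.toContinuousLinearMap l₀) = ⇑l₀ := rfl
      simpa [h13] using hF
    exact hD.differentiableAt


/- STATEMENT 16: for a norm `N` on a finite-dimensional space, the restriction
`N|V` to a subspace `V ∋ α` is differentiable at `α` iff all subderivatives of
`N` at `α` agree on `V`. -/
theorem stmt16 {X : Type*} [NormedAddCommGroup X] [NormedSpace ℝ X]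
    [FiniteDimensional ℝ X]
    (N : X → ℝ)
    (hNadd : ∀ x y, N (x + y) ≤ N x + N y)
    (hNsmul : ∀ (c : ℝ) x, N (c • x) = |c| * N x)
    (hNpos : ∀ x, x ≠ 0 → 0 < N x)
    (V : Submodule ℝ X) (α : X) (hα : α ∈ V) :
    DifferentiableAt ℝ (fun v : V => N (v : X)) (⟨α, hα⟩ : V) ↔
      ∀ l₁ l₂ : X →ₗ[ℝ] ℝ,
        (l₁ α = N α ∧ ∀ x, l₁ x ≤ N x) →
        (l₂ α = N α ∧ ∀ x, l₂ x ≤ N x) →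
        ∀ β ∈ V, l₁ β = l₂ β := by
  constructor
  · intro hdiff l₁ l₂ h₁ h₂ β hβ
    have key : ∀ l : X →ₗ[ℝ] ℝ, (l α = N α ∧ ∀ x, l x ≤ N x) →
        l β = (fderiv ℝ (fun v : V => N (v : X)) (⟨α, hα⟩ : V)) ⟨β, hβ⟩ := by
      intro l hl
      have h3 : (l.comp V.subtype) (⟨α, hα⟩ : V) = N ((⟨α, hα⟩ : V) : X) := hl.1
      have h4 : ∀ x : V, (l.comp V.subtype) x ≤ N (x : X) := fun x => hl.2 x
      have := aux_fwd (fun v : V => N (v : X)) (⟨α, hα⟩ : V) hdiff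
        (l.comp V.subtype) h3 h4 ⟨β, hβ⟩
      simpa using this
    rw [key l₁ h₁, key l₂ h₂]
  · intro Hyp
    have hadd : ∀ x y : V, N (((x + y : V) : X)) ≤ N (x : X) + N (y : X) := by
      intro x y
      have : ((x + y : V) : X) = (x : X) + (y : X) := rfl
      rw [this]
      exact hNadd _ _
    have hsmul : ∀ (c : ℝ) (x : V), N (((c • x : V) : X)) = |c| * N (x : X) := by
      intro c x
      have : ((c • x : V) : X) = c • (x : X) := rfl
      rw [this]
      exact hNsmul _ _
    refine aux_rev (fun v : V => N (v : X)) hadd hsmul (⟨α, hα⟩ : V) ?_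
    intro l₁ l₂ h₁ h₂
    -- extend both to X via Hahn-Banach
    have hext : ∀ l : V →ₗ[ℝ] ℝ,
        (l (⟨α, hα⟩ : V) = N α ∧ ∀ x : V, l x ≤ N (x : X)) →
        ∃ L : X →ₗ[ℝ] ℝ, (∀ x : V, L (x : X) = l x) ∧ (L α = N α ∧ ∀ x, L x ≤ N x) := by
      intro l hl
      obtain ⟨L, hL1, hL2⟩ := exists_extension_of_le_sublinear (LinearPMap.mk V l) N
        (fun c hc x => by rw [hNsmul, abs_of_pos hc])
        hNadd
        (fun x => hl.2 x)
      have hLV : ∀ x : V, L (x : X) = l x := fun x => hL1 x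
      refine ⟨L, hLV, ?_, hL2⟩
      rw [hLV ⟨α, hα⟩]
      exact hl.1
    obtain ⟨L₁, hL₁V, hL₁⟩ := hext l₁ h₁
    obtain ⟨L₂, hL₂V, hL₂⟩ := hext l₂ h₂
    have := Hyp L₁ L₂ hL₁ hL₂
    ext x
    rw [← hL₁V x, ← hL₂V x]
    exact this x x.2
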